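/- (Lin–Yau curvature-dimension inequality.) Let G = (V,E) be a finite simple graph in which every vertex has positive degree, and let d(G) = max_{v ∈ V} d(v) be the maximum vertex degree. Then for every function f : V → ℝ and every vertex x, Γ₂(f,f)(x) ≥ ½ (Δf(x))² + (1/d(G) − 1) · Γ(f,f)(x); that is, G satisfies the curvature-dimension inequality CD(2, 1/d(G) − 1). -/

import Mathlib

open Finset

variable {V : Type*} [Fintype V] [DecidableEq V]

/-- The (Lin–Yau convention) graph Laplacian operator on functions:
`(Δf)(x) = (1/d(x)) ∑_{y ~ x} (f y − f x)`. -/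
noncomputable def SimpleGraph.lapOp (G : SimpleGraph V) [DecidableRel G.Adj] (f : V → ℝ) : V → ℝ :=
  fun x => (∑ y ∈ G.neighborFinset x, (f y - f x)) / (G.degree x : ℝ)

/-- The bilinear form `Γ(f,g) = ½( Δ(fg) − f·Δg − g·Δf )`. -/
noncomputable def SimpleGraph.gammaOp (G : SimpleGraph V) [DecidableRel G.Adj] (f g : V → ℝ) : V → ℝ :=
  fun x => (G.lapOp (f * g) x - f x * G.lapOp g x - g x * G.lapOp f x) / 2

/-- The iterated form `Γ₂(f,g) = ½( ΔΓ(f,g) − Γ(f,Δg) − Γ(g,Δf) )`. -/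
noncomputable def SimpleGraph.gamma2Op (G : SimpleGraph V) [DecidableRel G.Adj] (f g : V → ℝ) : V → ℝ :=
  fun x => (G.lapOp (G.gammaOp f g) x - G.gammaOp f (G.lapOp g) x
      - G.gammaOp g (G.lapOp f) x) / 2

set_option linter.unusedSectionVars false

private lemma div_sub_sub' (A B C fx gx d : ℝ) :
    (A / d - fx * (B / d) - gx * (C / d)) / 2 = (A - fx * B - gx * C) / (2 * d) := by
  rw [mul_div_assoc', mul_div_assoc', div_sub_div_same, div_sub_div_same, div_div, mul_comm d 2]

lemma gamma_eq (G : SimpleGraph V) [DecidableRel G.Adj] (f g : V → ℝ) (x : V) :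
    G.gammaOp f g x
      = (∑ y ∈ G.neighborFinset x, (f y - f x) * (g y - g x)) / (2 * (G.degree x : ℝ)) := by
  unfold SimpleGraph.gammaOp SimpleGraph.lapOp
  rw [div_sub_sub']
  congr 1
  rw [Finset.mul_sum, Finset.mul_sum, ← Finset.sum_sub_distrib, ← Finset.sum_sub_distrib]
  refine Finset.sum_congr rfl fun y _ => ?_
  simp only [Pi.mul_apply]; ring

set_option linter.unusedSectionVars false

lemma gamma_sub (G : SimpleGraph V) [DecidableRel G.Adj] (f : V → ℝ) (x y : V)
    (hdy : 0 < G.degree y) :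
    G.gammaOp f f y - (f y - f x) * G.lapOp f y
      = (∑ z ∈ G.neighborFinset y, (f z - 2 * f y + f x) ^ 2) / (2 * (G.degree y : ℝ))
        - (f y - f x) ^ 2 / 2 := by
  have hd : (0:ℝ) < (G.degree y : ℝ) := by exact_mod_cast hdy
  have hconst : (G.degree y : ℝ) * (f y - f x) ^ 2
      = ∑ _z ∈ G.neighborFinset y, (f y - f x) ^ 2 := by
    rw [Finset.sum_const, nsmul_eq_mul, G.card_neighborFinset_eq_degree]
  have key : ∑ z ∈ G.neighborFinset y, (f z - 2 * f y + f x) ^ 2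
      = (∑ z ∈ G.neighborFinset y, (f z - f y) * (f z - f y))
        - 2 * (f y - f x) * (∑ z ∈ G.neighborFinset y, (f z - f y))
        + (G.degree y : ℝ) * (f y - f x) ^ 2 := by
    rw [hconst, Finset.mul_sum, ← Finset.sum_sub_distrib, ← Finset.sum_add_distrib]
    exact Finset.sum_congr rfl fun z _ => by ring
  rw [gamma_eq, key]
  unfold SimpleGraph.lapOp
  field_simp
  ring

lemma key_identity (G : SimpleGraph V) [DecidableRel G.Adj] (hdeg : ∀ v, 0 < G.degree v)
    (f : V → ℝ) (x : V) :
    2 * G.gamma2Op f f x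
      = (∑ y ∈ G.neighborFinset x,
            (∑ z ∈ G.neighborFinset y, (f z - 2 * f y + f x) ^ 2) / (G.degree y : ℝ))
          / (2 * (G.degree x : ℝ))
        - 2 * G.gammaOp f f x + (G.lapOp f x) ^ 2 := by
  have hdx : (0:ℝ) < (G.degree x : ℝ) := by exact_mod_cast hdeg x
  set N := G.neighborFinset x with hN
  set dx : ℝ := (G.degree x : ℝ) with hdxdef
  set Δ : V → ℝ := G.lapOp f with hΔ
  set Γ : V → ℝ := G.gammaOp f f with hΓ
  have h0 : 2 * G.gamma2Op f f x = G.lapOp Γ x - 2 * G.gammaOp f Δ x := by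
    unfold SimpleGraph.gamma2Op; rw [← hΔ, ← hΓ]; ring
  have hlap : G.lapOp Γ x = (∑ y ∈ N, (Γ y - Γ x)) / dx := rfl
  have hΔx : Δ x = (∑ y ∈ N, (f y - f x)) / dx := rfl
  have hsumf : ∑ y ∈ N, (f y - f x) = dx * Δ x := by
    rw [hΔx]; field_simp
  have hconst : ∀ c : ℝ, ∑ _y ∈ N, c = dx * c := by
    intro c
    rw [Finset.sum_const, nsmul_eq_mul, hN, G.card_neighborFinset_eq_degree]
  have e1 : ∑ y ∈ N, (Γ y - Γ x) = (∑ y ∈ N, Γ y) - dx * Γ x := by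
    rw [Finset.sum_sub_distrib, hconst]
  have e2 : ∑ y ∈ N, (f y - f x) * (Δ y - Δ x)
      = (∑ y ∈ N, (f y - f x) * Δ y) - dx * Δ x * Δ x := by
    have : ∑ y ∈ N, (f y - f x) * (Δ y - Δ x)
        = (∑ y ∈ N, (f y - f x) * Δ y) - (∑ y ∈ N, (f y - f x)) * Δ x := by
      rw [Finset.sum_mul, ← Finset.sum_sub_distrib]
      exact Finset.sum_congr rfl fun y _ => by ring
    rw [this, hsumf]
  have e3 : (∑ y ∈ N, Γ y) - (∑ y ∈ N, (f y - f x) * Δ y)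
      = (∑ y ∈ N, (∑ z ∈ G.neighborFinset y, (f z - 2 * f y + f x) ^ 2)
            / (G.degree y : ℝ)) / 2
        - (∑ y ∈ N, (f y - f x) ^ 2) / 2 := by
    rw [← Finset.sum_sub_distrib, Finset.sum_div, Finset.sum_div,
      ← Finset.sum_sub_distrib]
    refine Finset.sum_congr rfl fun y _ => ?_
    rw [hΓ, hΔ, gamma_sub G f x y (hdeg y)]
    ring
  have eQ : ∑ y ∈ N, (f y - f x) ^ 2 = 2 * dx * Γ x := by
    have := gamma_eq G f f x
    rw [← hΓ, ← hN, ← hdxdef] at this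
    have h2 : ∑ y ∈ N, (f y - f x) * (f y - f x) = ∑ y ∈ N, (f y - f x) ^ 2 :=
      Finset.sum_congr rfl fun y _ => by ring
    rw [h2] at this
    field_simp at this
    linarith
  rw [h0, hlap, gamma_eq G f Δ x, ← hN, ← hdxdef, e1, e2]
  have e4 : (∑ y ∈ N, Γ y) = (∑ y ∈ N, (f y - f x) * Δ y)
      + (∑ y ∈ N, (∑ z ∈ G.neighborFinset y, (f z - 2 * f y + f x) ^ 2)
            / (G.degree y : ℝ)) / 2
      - (2 * dx * Γ x) / 2 := by
    rw [← eQ]; linarith [e3]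
  rw [e4]
  field_simp
  ring


/-- (Lin–Yau curvature-dimension inequality.)  A finite simple graph with all vertex
degrees positive and maximal degree `d(G)` satisfies `CD(2, 1/d(G) − 1)`:
`Γ₂(f,f)(x) ≥ ½ (Δf(x))² + (1/d(G) − 1)·Γ(f,f)(x)` for all `f : V → ℝ` and all `x`. -/
theorem lin_yau_curvature_dimension_inequality
    (G : SimpleGraph V) [DecidableRel G.Adj] (hdeg : ∀ v, 0 < G.degree v)
    (f : V → ℝ) (x : V) :
    G.gamma2Op f f x ≥
      (1 / 2) * (G.lapOp f x) ^ 2 + (1 / (G.maxDegree : ℝ) - 1) * G.gammaOp f f x := by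
  have hdx : (0:ℝ) < (G.degree x : ℝ) := by exact_mod_cast hdeg x
  have hDnat : 0 < G.maxDegree := lt_of_lt_of_le (hdeg x) (G.degree_le_maxDegree x)
  have hD : (0:ℝ) < (G.maxDegree : ℝ) := by exact_mod_cast hDnat
  set D := (G.maxDegree : ℝ) with hDdef
  set dx := (G.degree x : ℝ) with hdxdef
  set S := ∑ y ∈ G.neighborFinset x,
      (∑ z ∈ G.neighborFinset y, (f z - 2 * f y + f x) ^ 2) / (G.degree y : ℝ) with hS
  set Q := ∑ y ∈ G.neighborFinset x, (f y - f x) ^ 2 with hQ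
  have hGamma : G.gammaOp f f x = Q / (2 * dx) := by
    rw [gamma_eq, ← hdxdef]
    congr 1
    exact Finset.sum_congr rfl fun y _ => by ring
  have hkey := key_identity G hdeg f x
  rw [← hS, ← hdxdef, hGamma] at hkey
  have hbound : 2 * Q ≤ S * D := by
    have hterm : ∀ y ∈ G.neighborFinset x, 2 * (f y - f x) ^ 2
        ≤ ((∑ z ∈ G.neighborFinset y, (f z - 2 * f y + f x) ^ 2) / (G.degree y : ℝ)) * D := by
      intro y hy
      have hdy : (0:ℝ) < (G.degree y : ℝ) := by exact_mod_cast hdeg y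
      have hxy : x ∈ G.neighborFinset y := by
        rw [SimpleGraph.mem_neighborFinset] at hy ⊢; exact hy.symm
      have h1 : 4 * (f y - f x) ^ 2 ≤ ∑ z ∈ G.neighborFinset y, (f z - 2 * f y + f x) ^ 2 :=
        calc 4 * (f y - f x) ^ 2 = (f x - 2 * f y + f x) ^ 2 := by ring
          _ ≤ _ := Finset.single_le_sum (f := fun z => (f z - 2 * f y + f x) ^ 2)
              (fun z _ => sq_nonneg _) hxy
      have hdyD : (G.degree y : ℝ) ≤ D := by
        rw [hDdef]; exact_mod_cast G.degree_le_maxDegree y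
      have hIpos : (0:ℝ) ≤ ∑ z ∈ G.neighborFinset y, (f z - 2 * f y + f x) ^ 2 :=
        Finset.sum_nonneg fun z _ => sq_nonneg _
      have h2 : (∑ z ∈ G.neighborFinset y, (f z - 2 * f y + f x) ^ 2)
          ≤ ((∑ z ∈ G.neighborFinset y, (f z - 2 * f y + f x) ^ 2) / (G.degree y : ℝ)) * D := by
        rw [div_mul_eq_mul_div, le_div_iff₀ hdy]
        exact mul_le_mul_of_nonneg_left hdyD hIpos
      nlinarith [h1, h2, sq_nonneg (f y - f x)]
    calc 2 * Q = ∑ y ∈ G.neighborFinset x, 2 * (f y - f x) ^ 2 := by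
          rw [hQ, Finset.mul_sum]
      _ ≤ ∑ y ∈ G.neighborFinset x,
            ((∑ z ∈ G.neighborFinset y, (f z - 2 * f y + f x) ^ 2) / (G.degree y : ℝ)) * D :=
          Finset.sum_le_sum hterm
      _ = S * D := by rw [hS, Finset.sum_mul]
  rw [ge_iff_le, hGamma]
  have main : (1 / D - 1) * (Q / (2 * dx)) * 2 ≤ S / (2 * dx) - 2 * (Q / (2 * dx)) := by
    have hdiv : Q / (dx * D) ≤ S / (2 * dx) := by
      rw [div_le_div_iff₀ (by positivity) (by positivity)]
      have h3 := mul_le_mul_of_nonneg_right hbound hdx.le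
      nlinarith [h3]
    have e : (1 / D - 1) * (Q / (2 * dx)) * 2 = Q / (dx * D) - 2 * (Q / (2 * dx)) := by
      field_simp
    linarith
  linarith [hkey, main]
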